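/- Let H be a complex Hilbert space and let f : H → H be a bounded linear operator of finite rank. Then f is unit regular in the semigroup of bounded operators on H: there exists a continuous linear automorphism u of H (an invertible bounded operator with bounded inverse) such that f ∘ u ∘ f = f. -/

import Mathlib

open Module

/-- Any injective linear map from a subspace of a finite-dimensional vector space into the
space extends to an automorphism of the whole space. -/
lemma exists_linearEquiv_extend {K V : Type*} [Field K] [AddCommGroup V] [Module K V]
    [FiniteDimensional K V] (W : Submodule K V) (j : W →ₗ[K] V) (hj : Function.Injective j) :
    ∃ φ : V ≃ₗ[K] V, ∀ w : W, φ ↑w = j w := by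
  obtain ⟨W', hW'⟩ := Submodule.exists_isCompl W
  obtain ⟨R', hR'⟩ := Submodule.exists_isCompl (LinearMap.range j)
  let eW : W ≃ₗ[K] LinearMap.range j := LinearEquiv.ofInjective j hj
  have hdim : finrank K W' = finrank K R' := by
    have h1 := Submodule.finrank_add_eq_of_isCompl hW'
    have h2 := Submodule.finrank_add_eq_of_isCompl hR'
    have h3 : finrank K W = finrank K (LinearMap.range j) := eW.finrank_eq
    omega
  have eC : W' ≃ₗ[K] R' := LinearEquiv.ofFinrankEq _ _ hdim
  refine ⟨(Submodule.prodEquivOfIsCompl W W' hW').symm.trans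
    ((eW.prodCongr eC).trans (Submodule.prodEquivOfIsCompl _ R' hR')), fun w => ?_⟩
  simp only [LinearEquiv.trans_apply, Submodule.prodEquivOfIsCompl_symm_apply_left,
    LinearEquiv.prodCongr_apply, Submodule.coe_prodEquivOfIsCompl', map_zero,
    Submodule.coe_zero, add_zero, LinearEquiv.ofInjective_apply, eW]

/-- Every finite-rank bounded operator on a complex Hilbert space is
unit regular: `f ∘ u ∘ f = f` for some continuous linear automorphism `u` of `H`. -/
theorem finite_rank_unit_regular {H : Type*}
    [NormedAddCommGroup H] [InnerProductSpace ℂ H] [CompleteSpace H]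
    (f : H →L[ℂ] H) (hf : FiniteDimensional ℂ (LinearMap.range (f : H →ₗ[ℂ] H))) :
    ∃ u : H ≃L[ℂ] H, f.comp ((u : H →L[ℂ] H).comp f) = f := by
  classical
  set K : Submodule ℂ H := LinearMap.ker (f : H →ₗ[ℂ] H) with hKdef
  haveI : CompleteSpace K := (ContinuousLinearMap.isClosed_ker f).completeSpace_coe
  -- the restriction of `f` to `Kᗮ`, corestricted to its range
  let g : Kᗮ →ₗ[ℂ] LinearMap.range (f : H →ₗ[ℂ] H) :=
    LinearMap.codRestrict (LinearMap.range (f : H →ₗ[ℂ] H)) ((f : H →ₗ[ℂ] H).domRestrict Kᗮ)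
      (fun x => LinearMap.mem_range_self _ _)
  have hginj : Function.Injective g := by
    intro x y hxy
    have hfxy : f (x : H) = f (y : H) := congrArg Subtype.val hxy
    have h1 : ((x : H) - (y : H)) ∈ K :=
      LinearMap.mem_ker.mpr (by rw [map_sub, sub_eq_zero]; exact hfxy)
    have h2 : ((x : H) - (y : H)) ∈ Kᗮ := Kᗮ.sub_mem x.2 y.2
    have hmem : ((x : H) - (y : H)) ∈ K ⊓ Kᗮ := Submodule.mem_inf.mpr ⟨h1, h2⟩
    rw [Submodule.inf_orthogonal_eq_bot, Submodule.mem_bot, sub_eq_zero] at hmem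
    exact Subtype.ext hmem
  have hgsurj : Function.Surjective g := by
    rintro ⟨y, x, rfl⟩
    refine ⟨(Kᗮ).orthogonalProjectionOnto x, ?_⟩
    apply Subtype.ext
    show f (((Kᗮ).orthogonalProjectionOnto x : H)) = f x
    have hmem : x - ((Kᗮ).orthogonalProjectionOnto x : H) ∈ K := by
      have := Submodule.sub_starProjection_mem_orthogonal (K := Kᗮ) x
      rwa [Submodule.orthogonal_orthogonal] at this
    have : f (x - ((Kᗮ).orthogonalProjectionOnto x : H)) = 0 := hmem
    rw [map_sub, sub_eq_zero] at this
    exact this.symm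
  haveI : FiniteDimensional ℂ Kᗮ := FiniteDimensional.of_injective g hginj
  -- the inverse isomorphism
  let e : LinearMap.range (f : H →ₗ[ℂ] H) ≃ₗ[ℂ] Kᗮ := (LinearEquiv.ofBijective g ⟨hginj, hgsurj⟩).symm
  have he : ∀ y : LinearMap.range (f : H →ₗ[ℂ] H), f ((e y : Kᗮ) : H) = (y : H) := by
    intro y
    have : g (e y) = y := (LinearEquiv.ofBijective g ⟨hginj, hgsurj⟩).apply_symm_apply y
    exact congrArg Subtype.val this
  -- the finite-dimensional space V
  set V : Submodule ℂ H := Kᗮ ⊔ LinearMap.range (f : H →ₗ[ℂ] H) with hVdef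
  haveI : FiniteDimensional ℂ V := Submodule.finiteDimensional_sup _ _
  haveI : CompleteSpace V := FiniteDimensional.complete ℂ V
  have hle : LinearMap.range (f : H →ₗ[ℂ] H) ≤ V := le_sup_right
  have hKle : Kᗮ ≤ V := le_sup_left
  set W : Submodule ℂ V := Submodule.comap V.subtype (LinearMap.range (f : H →ₗ[ℂ] H)) with hWdef
  let m : W ≃ₗ[ℂ] LinearMap.range (f : H →ₗ[ℂ] H) := Submodule.comapSubtypeEquivOfLe hle
  let j : W →ₗ[ℂ] V :=
    (Submodule.inclusion hKle).comp (e.toLinearMap.comp m.toLinearMap)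
  have hjinj : Function.Injective j :=
    (Submodule.inclusion_injective hKle).comp (e.injective.comp m.injective)
  obtain ⟨φ, hφ⟩ := exists_linearEquiv_extend W j hjinj
  let ψ : V ≃L[ℂ] V := φ.toContinuousLinearEquiv
  -- the automorphism u of H
  let F : H →L[ℂ] H :=
    V.subtypeL.comp ((ψ : V →L[ℂ] V).comp ((V).orthogonalProjectionOnto)) +
      Vᗮ.subtypeL.comp ((Vᗮ).orthogonalProjectionOnto)
  let G : H →L[ℂ] H :=
    V.subtypeL.comp ((ψ.symm : V →L[ℂ] V).comp ((V).orthogonalProjectionOnto)) +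
      Vᗮ.subtypeL.comp ((Vᗮ).orthogonalProjectionOnto)
  have hPV : ∀ (a : V) (b : Vᗮ), (V).orthogonalProjectionOnto ((a : H) + (b : H)) = a := by
    intro a b
    rw [map_add, Submodule.orthogonalProjectionOnto_mem_subspace_eq_self,
      Submodule.orthogonalProjectionOnto_apply_of_mem_orthogonal b.2, add_zero]
  have hPVo : ∀ (a : V) (b : Vᗮ), (Vᗮ).orthogonalProjectionOnto ((a : H) + (b : H)) = b := by
    intro a b
    rw [map_add, Submodule.orthogonalProjectionOnto_mem_subspace_eq_self,
      Submodule.orthogonalProjectionOnto_apply_of_mem_orthogonal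
        (Submodule.le_orthogonal_orthogonal V a.2), zero_add]
  have hGF : ∀ x, G (F x) = x := by
    intro x
    show (↑(ψ.symm ((V).orthogonalProjectionOnto (F x))) : H) + ↑((Vᗮ).orthogonalProjectionOnto (F x)) = x
    have hFx : F x = ↑(ψ ((V).orthogonalProjectionOnto x)) + ↑((Vᗮ).orthogonalProjectionOnto x) := rfl
    rw [hFx, hPV, hPVo, ψ.symm_apply_apply]
    exact Submodule.starProjection_add_starProjection_orthogonal (K := V) x
  have hFG : ∀ x, F (G x) = x := by
    intro x
    show (↑(ψ ((V).orthogonalProjectionOnto (G x))) : H) + ↑((Vᗮ).orthogonalProjectionOnto (G x)) = x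
    have hGx : G x = ↑(ψ.symm ((V).orthogonalProjectionOnto x)) + ↑((Vᗮ).orthogonalProjectionOnto x) := rfl
    rw [hGx, hPV, hPVo, ψ.apply_symm_apply]
    exact Submodule.starProjection_add_starProjection_orthogonal (K := V) x
  refine ⟨ContinuousLinearEquiv.equivOfInverse F G hGF hFG, ?_⟩
  ext x
  show f (F (f x)) = f x
  have hfx : f x ∈ V := hle (LinearMap.mem_range_self _ x)
  have hPVfx : (V).orthogonalProjectionOnto (f x) = ⟨f x, hfx⟩ := by
    apply Subtype.ext
    exact (Submodule.starProjection_eq_self_iff (K := V) (v := f x)).mpr hfx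
  have hPVofx : (Vᗮ).orthogonalProjectionOnto (f x) = 0 :=
    Submodule.orthogonalProjectionOnto_apply_of_mem_orthogonal
      (Submodule.le_orthogonal_orthogonal V hfx)
  have hFfx : F (f x) = ↑(ψ ⟨f x, hfx⟩) := by
    show (↑(ψ ((V).orthogonalProjectionOnto (f x))) : H) + ↑((Vᗮ).orthogonalProjectionOnto (f x)) = _
    rw [hPVfx, hPVofx]
    simp
  rw [hFfx]
  set w : W := ⟨⟨f x, hfx⟩, LinearMap.mem_range_self _ x⟩ with hwdef
  have hψw : ψ ⟨f x, hfx⟩ = j w := hφ w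
  rw [hψw]
  have hjw : ((j w : V) : H) = ((e (m w) : Kᗮ) : H) := rfl
  have hmw : (m w : H) = f x := rfl
  calc f ((j w : V) : H) = f ((e (m w) : Kᗮ) : H) := by rw [hjw]
    _ = ((m w : LinearMap.range (f : H →ₗ[ℂ] H)) : H) := he (m w)
    _ = f x := hmw
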